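/- For any 𝐤∈ℕ[Φ]^W, a weight μ∈P is a sink of →_{tr,𝐤} (i.e. there is no ν with μ→_{tr,𝐤}ν) if and only if μ=η_𝐤(λ) for some λ∈P. -/

import Mathlib

open RealInnerProductSpace Pointwise

noncomputable section

variable {V : Type*} [NormedAddCommGroup V] [InnerProductSpace ℝ V]

/-- The coroot `α∨ = 2α/⟨α,α⟩` associated to a vector `α`. -/
def coroot (α : V) : V := (2 / ⟪α, α⟫) • α

/-- The reflection `s_α(v) = v − ⟨v,α∨⟩α` across the hyperplane orthogonal to `α`. -/
def sRefl (α : V) (v : V) : V := v - ⟪v, coroot α⟫ • α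

/-- An irreducible reduced crystallographic root system in the real inner product
space `V`, together with a chosen set of positive roots and simple roots. -/
structure RootSystemData (V : Type*) [NormedAddCommGroup V] [InnerProductSpace ℝ V] where
  n : ℕ
  roots : Set V
  roots_finite : roots.Finite
  roots_nonzero : (0 : V) ∉ roots
  roots_span : Submodule.span ℝ roots = ⊤
  refl_mem : ∀ α ∈ roots, ∀ β ∈ roots, sRefl α β ∈ roots
  reduced : ∀ α ∈ roots, ∀ c : ℝ, c • α ∈ roots → c • α = α ∨ c • α = -α
  crystallographic : ∀ α ∈ roots, ∀ β ∈ roots, ∃ m : ℤ, ⟪β, coroot α⟫ = (m : ℝ)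
  pos : Set V
  pos_subset : pos ⊆ roots
  pos_union : roots = pos ∪ (-pos)
  simple : Fin n → V
  simple_mem : ∀ i, simple i ∈ pos
  simple_li : LinearIndependent ℝ simple
  simple_span : Submodule.span ℝ (Set.range simple) = ⊤
  pos_combo : ∀ α ∈ pos, ∃ c : Fin n → ℕ, α = ∑ i, (c i : ℝ) • simple i
  irred : ∀ S₁ S₂ : Set V, roots = S₁ ∪ S₂ →
    (∀ α ∈ S₁, ∀ β ∈ S₂, ⟪α, β⟫ = 0) → S₁ = ∅ ∨ S₂ = ∅

namespace RootSystemData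

variable (R : RootSystemData V)

/-- The Weyl group `W`: all finite compositions of reflections in roots. -/
def weyl : Set (V → V) :=
  {w | ∃ l : List V, (∀ α ∈ l, α ∈ R.roots) ∧ w = (l.map sRefl).foldr (· ∘ ·) id}

/-- The orbit `W(v)` of a vector under the Weyl group. -/
def orbit (v : V) : Set V := {u | ∃ w ∈ R.weyl, u = w v}

/-- The weight lattice `P`. -/
def weightLattice : Set V :=
  {v | ∀ α ∈ R.roots, ∃ m : ℤ, ⟪v, coroot α⟫ = (m : ℝ)}

/-- The permutohedron `Π(v) = ConvexHull W(v)`. -/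
def perm (v : V) : Set V := convexHull ℝ (R.orbit v)

/-- The discrete permutohedron `Π^Q(λ) = Π(λ) ∩ (Q+λ)`. -/
def permQ (lam : V) : Set V :=
  R.perm lam ∩ {v | v - lam ∈ Submodule.span ℤ R.roots}

/-- Dominance: nonnegative pairing with all simple coroots. -/
def IsDominant (v : V) : Prop := ∀ i, 0 ≤ ⟪v, coroot (R.simple i)⟫

/-- `W`-invariance of a function `𝐤 : Φ → ℕ`. -/
def IsWInvariant (k : V → ℕ) : Prop := ∀ w ∈ R.weyl, ∀ α ∈ R.roots, k (w α) = k α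

/-- Symmetric interval-firing: `λ → λ+α` for `α ∈ Φ⁺` whenever
`⟨λ,α∨⟩+1 ∈ {−𝐤(α),…,𝐤(α)}`. -/
def symFire (k : V → ℕ) (lam mu : V) : Prop :=
  lam ∈ R.weightLattice ∧ ∃ α ∈ R.pos, mu = lam + α ∧
    -(k α : ℝ) ≤ ⟪lam, coroot α⟫ + 1 ∧ ⟪lam, coroot α⟫ + 1 ≤ (k α : ℝ)

/-- Truncated interval-firing: `λ → λ+α` for `α ∈ Φ⁺` whenever
`⟨λ,α∨⟩+1 ∈ {−𝐤(α)+1,…,𝐤(α)}`. -/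
def trFire (k : V → ℕ) (lam mu : V) : Prop :=
  lam ∈ R.weightLattice ∧ ∃ α ∈ R.pos, mu = lam + α ∧
    -(k α : ℝ) + 1 ≤ ⟪lam, coroot α⟫ + 1 ∧ ⟪lam, coroot α⟫ + 1 ≤ (k α : ℝ)

/-- All roots have the same length. -/
def SimplyLaced : Prop := ∀ α ∈ R.roots, ∀ β ∈ R.roots, ‖α‖ = ‖β‖

/-- A root of maximal length. -/
def IsLongRoot (α : V) : Prop := α ∈ R.roots ∧ ∀ β ∈ R.roots, ‖β‖ ≤ ‖α‖

/-- A root which is not of maximal length. -/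
def IsShortRoot (α : V) : Prop := α ∈ R.roots ∧ ¬ R.IsLongRoot α

/-- `𝐤` is good: either `Φ` is simply laced, or `𝐤` vanishing on short roots
implies `𝐤` vanishing on all (in particular long) roots. -/
def IsGood (k : V → ℕ) : Prop :=
  R.SimplyLaced ∨ ((∀ α, R.IsShortRoot α → k α = 0) → ∀ β ∈ R.roots, k β = 0)

/-- The product of the simple reflections indexed by a word. -/
def wordProd (l : List (Fin R.n)) : V → V :=
  (l.map (fun i => sRefl (R.simple i))).foldr (· ∘ ·) id

/-- Coxeter length: the minimal length of a word in the simple reflections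
expressing `w`. -/
def coxLen (w : V → V) : ℕ :=
  sInf {m : ℕ | ∃ l : List (Fin R.n), l.length = m ∧ w = R.wordProd l}

/-- The parabolic subgroup `W_I`: all compositions of simple reflections `s_{αᵢ}`, `i ∈ I`. -/
def weylI (I : Set (Fin R.n)) : Set (V → V) :=
  {w | ∃ l : List (Fin R.n), (∀ i ∈ l, i ∈ I) ∧ w = R.wordProd l}

/-- The orbit `W_I(v)`. -/
def orbitI (I : Set (Fin R.n)) (v : V) : Set V := {u | ∃ w ∈ R.weylI I, u = w v}

/-- The discrete parabolic permutohedron `Π^Q_I(λ)`. -/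
def permQI (I : Set (Fin R.n)) (lam : V) : Set V :=
  convexHull ℝ (R.orbitI I lam) ∩ {v | v - lam ∈ Submodule.span ℤ R.roots}

/-- Given a choice `dm` of dominant representatives, `I^{0,1}_λ` is the set of
indices `i` with `⟨λ_dom, αᵢ∨⟩ ∈ {0,1}`. -/
def I01 (dm : V → V) (lam : V) : Set (Fin R.n) :=
  {i | ⟪dm lam, coroot (R.simple i)⟫ = 0 ∨ ⟪dm lam, coroot (R.simple i)⟫ = 1}

/-- The minimal length of an `α`-traverse in `Π^Q(λ)`. -/
def traverseLen (lam α : V) : ℕ :=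
  sInf {ℓ : ℕ | ∃ mu : V, (∀ i : ℕ, i ≤ ℓ → mu - (i : ℝ) • α ∈ R.permQ lam) ∧
    mu + α ∉ R.permQ lam ∧ mu - ((ℓ : ℝ) + 1) • α ∉ R.permQ lam}

/-- `m_λ(α) = min {cᵢ : αᵢ ∈ W(α)}` where `λ = Σ cᵢ ωᵢ` is dominant,
i.e. `cᵢ = ⟨λ, αᵢ∨⟩`. -/
def mVal (lam α : V) : ℕ :=
  sInf {c : ℕ | ∃ i, R.simple i ∈ R.orbit α ∧ (c : ℝ) = ⟪lam, coroot (R.simple i)⟫}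

/-- Funny weights (only exist when `Φ` is not simply laced). -/
def IsFunny (lam : V) : Prop :=
  ¬ R.SimplyLaced ∧ ∃ l s : Fin R.n, R.IsLongRoot (R.simple l) ∧ R.IsShortRoot (R.simple s) ∧
    ⟪R.simple l, coroot (R.simple s)⟫ ≠ 0 ∧
    ⟪lam, coroot (R.simple s)⟫ = 0 ∧ 1 ≤ ⟪lam, coroot (R.simple l)⟫ ∧
    ∀ i, R.IsLongRoot (R.simple i) → ⟪lam, coroot (R.simple l)⟫ ≤ ⟪lam, coroot (R.simple i)⟫

end RootSystemData

/-- The map `η_𝐤(λ) = λ + w_λ(ρ_𝐤)`, relative to a choice `fw` of fundamental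
weights and a choice `wl` of minimal-length Weyl elements `λ ↦ w_λ`. -/
def etaMap (R : RootSystemData V) (fw : Fin R.n → V) (wl : V → V → V)
    (k : V → ℕ) (lam : V) : V :=
  lam + wl lam (∑ i, (k (R.simple i) : ℝ) • fw i)

/-- Two points are in the same connected component of a relation if they are
related by its reflexive-transitive-symmetric closure. -/
def SameComponent (r : V → V → Prop) (x y : V) : Prop :=
  Relation.ReflTransGen (fun a b => r a b ∨ r b a) x y


section RSAux

open Finset

lemma inner_coroot_eq (α v : V) : ⟪v, coroot α⟫ = 2 / ⟪α, α⟫ * ⟪v, α⟫ := by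
  simp [coroot, real_inner_smul_right]

lemma coroot_neg (α : V) : coroot (-α) = - coroot α := by
  simp [coroot]

lemma inner_self_coroot {α : V} (h : α ≠ 0) : ⟪α, coroot α⟫ = 2 := by
  rw [inner_coroot_eq]
  have : ⟪α, α⟫ ≠ 0 := inner_self_ne_zero.2 h
  field_simp

lemma sRefl_add (α x y : V) : sRefl α (x + y) = sRefl α x + sRefl α y := by
  simp only [sRefl, inner_add_left, add_smul]; abel

lemma sRefl_smul (α : V) (c : ℝ) (x : V) : sRefl α (c • x) = c • sRefl α x := by
  simp only [sRefl, real_inner_smul_left, smul_sub, mul_smul]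

lemma sRefl_neg_root (α : V) : sRefl (-α) = sRefl α := by
  funext v
  simp only [sRefl, coroot_neg, inner_neg_right, smul_neg, neg_smul, neg_neg]

lemma sRefl_inner {α : V} (h : α ≠ 0) (x y : V) : ⟪sRefl α x, sRefl α y⟫ = ⟪x, y⟫ := by
  have hs : ⟪α, α⟫ ≠ 0 := inner_self_ne_zero.2 h
  simp only [sRefl, inner_coroot_eq, inner_sub_left, inner_sub_right,
    real_inner_smul_left, real_inner_smul_right]
  field_simp
  rw [real_inner_comm α y]
  ring

lemma sRefl_sRefl {α : V} (h : α ≠ 0) (x : V) : sRefl α (sRefl α x) = x := by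
  have h2 : ⟪α, coroot α⟫ = 2 := inner_self_coroot h
  simp only [sRefl, inner_sub_left, real_inner_smul_left, h2]
  module

lemma sRefl_self {α : V} (h : α ≠ 0) : sRefl α α = -α := by
  have h2 : ⟪α, coroot α⟫ = 2 := inner_self_coroot h
  simp only [sRefl, h2]
  module

lemma sRefl_symm (α x y : V) : ⟪sRefl α x, y⟫ = ⟪x, sRefl α y⟫ := by
  simp only [sRefl, inner_coroot_eq, inner_sub_left, inner_sub_right,
    real_inner_smul_left, real_inner_smul_right]
  rw [real_inner_comm α x, real_inner_comm y α]
  ring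

lemma sRefl_fix {α x : V} (h : ⟪x, coroot α⟫ = 0) : sRefl α x = x := by
  simp [sRefl, h]

namespace RootSystemData

variable (R : RootSystemData V)

lemma root_ne_zero {γ : V} (h : γ ∈ R.roots) : γ ≠ 0 := fun h0 => R.roots_nonzero (h0 ▸ h)

lemma simple_root (i : Fin R.n) : R.simple i ∈ R.roots := R.pos_subset (R.simple_mem i)

lemma simple_ne_zero (i : Fin R.n) : R.simple i ≠ 0 := R.root_ne_zero (R.simple_root i)

/-- Bundle of properties of Weyl group elements. -/
def IsOrtho (w : V → V) : Prop :=
  (∀ x y : V, w (x + y) = w x + w y) ∧ (∀ (c : ℝ) (x : V), w (c • x) = c • w x) ∧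
  (∀ x y : V, ⟪w x, w y⟫ = ⟪x, y⟫) ∧ (∀ γ ∈ R.roots, w γ ∈ R.roots)

variable {R}

lemma IsOrtho.lin {w : V → V} (h : R.IsOrtho w) :
    ∃ L : V →ₗ[ℝ] V, w = ⇑L := ⟨{ toFun := w, map_add' := h.1, map_smul' := h.2.1 }, rfl⟩

lemma IsOrtho.map_sum {w : V → V} (h : R.IsOrtho w) {ι : Type*} (s : Finset ι) (f : ι → V) :
    w (∑ i ∈ s, f i) = ∑ i ∈ s, w (f i) := by
  obtain ⟨L, rfl⟩ := h.lin; exact _root_.map_sum L f s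

lemma IsOrtho.map_zero {w : V → V} (h : R.IsOrtho w) : w 0 = 0 := by
  obtain ⟨L, rfl⟩ := h.lin; exact L.map_zero

lemma IsOrtho.map_neg {w : V → V} (h : R.IsOrtho w) (x : V) : w (-x) = - w x := by
  obtain ⟨L, rfl⟩ := h.lin; exact L.map_neg x

lemma IsOrtho.map_sub {w : V → V} (h : R.IsOrtho w) (x y : V) : w (x - y) = w x - w y := by
  obtain ⟨L, rfl⟩ := h.lin; exact L.map_sub x y

lemma IsOrtho.map_coroot {w : V → V} (h : R.IsOrtho w) (γ : V) :
    w (coroot γ) = coroot (w γ) := by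
  rw [coroot, coroot, h.2.1, h.2.2.1 γ γ]

lemma IsOrtho.inner_coroot {w : V → V} (h : R.IsOrtho w) (x γ : V) :
    ⟪w x, coroot (w γ)⟫ = ⟪x, coroot γ⟫ := by
  rw [← h.map_coroot, h.2.2.1]

lemma IsOrtho.sRefl_conj {w : V → V} (h : R.IsOrtho w) (γ x : V) :
    w (sRefl γ x) = sRefl (w γ) (w x) := by
  rw [sRefl, sRefl, ← h.inner_coroot x γ, h.map_sub, h.2.1]

lemma IsOrtho.injective {w : V → V} (h : R.IsOrtho w) : Function.Injective w := by
  intro x y hxy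
  have h0 : ⟪x - y, x - y⟫ = (0 : ℝ) := by
    rw [← h.2.2.1, h.map_sub, hxy, sub_self, inner_zero_left]
  exact sub_eq_zero.1 (inner_self_eq_zero.1 h0)

omit [NormedAddCommGroup V] [InnerProductSpace ℝ V] in
lemma foldr_comp_init (A : List (V → V)) (g : V → V) :
    A.foldr (· ∘ ·) g = A.foldr (· ∘ ·) id ∘ g := by
  induction A with
  | nil => rfl
  | cons a t ih =>
      show a ∘ t.foldr (· ∘ ·) g = (a ∘ t.foldr (· ∘ ·) id) ∘ g
      rw [ih]
      rfl

lemma isOrtho_id : R.IsOrtho id := by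
  refine ⟨fun _ _ => rfl, fun _ _ => rfl, fun _ _ => rfl, fun γ hγ => hγ⟩

lemma isOrtho_comp {w w' : V → V} (h : R.IsOrtho w) (h' : R.IsOrtho w') :
    R.IsOrtho (w ∘ w') := by
  refine ⟨fun x y => by simp [h'.1, h.1], fun c x => by simp [h'.2.1, h.2.1],
    fun x y => by simp [h.2.2.1, h'.2.2.1], fun γ hγ => h.2.2.2 _ (h'.2.2.2 γ hγ)⟩

lemma isOrtho_sRefl {γ : V} (hγ : γ ∈ R.roots) : R.IsOrtho (sRefl γ) :=
  ⟨sRefl_add γ, sRefl_smul γ, sRefl_inner (R.root_ne_zero hγ), fun β hβ => R.refl_mem γ hγ β hβ⟩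

lemma sRefl_mem_weyl {γ : V} (hγ : γ ∈ R.roots) : sRefl γ ∈ R.weyl :=
  ⟨[γ], by simpa using hγ, by simp⟩

lemma id_mem_weyl : (id : V → V) ∈ R.weyl := ⟨[], by simp, by simp⟩

lemma weyl_comp {w w' : V → V} (h : w ∈ R.weyl) (h' : w' ∈ R.weyl) : w ∘ w' ∈ R.weyl := by
  obtain ⟨l, hl, rfl⟩ := h
  obtain ⟨l', hl', rfl⟩ := h'
  refine ⟨l ++ l', fun α hα => ?_, by
    rw [List.map_append, List.foldr_append,
      foldr_comp_init (l.map sRefl) ((l'.map sRefl).foldr (· ∘ ·) id)]⟩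
  rcases List.mem_append.1 hα with hα | hα
  exacts [hl α hα, hl' α hα]

lemma weyl_isOrtho {w : V → V} (h : w ∈ R.weyl) : R.IsOrtho w := by
  obtain ⟨l, hl, rfl⟩ := h
  induction l with
  | nil => exact isOrtho_id
  | cons a t ih =>
      have ha : a ∈ R.roots := hl a List.mem_cons_self
      have ht := ih (fun α hα => hl α (List.mem_cons_of_mem a hα))
      change R.IsOrtho (sRefl a ∘ (t.map sRefl).foldr (· ∘ ·) id)
      exact isOrtho_comp (isOrtho_sRefl ha) ht

lemma weyl_inv {w : V → V} (h : w ∈ R.weyl) :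
    ∃ w' ∈ R.weyl, (∀ x, w' (w x) = x) ∧ (∀ x, w (w' x) = x) := by
  obtain ⟨l, hl, rfl⟩ := h
  induction l with
  | nil => exact ⟨id, R.id_mem_weyl, fun x => rfl, fun x => rfl⟩
  | cons a t ih =>
      have ha : a ∈ R.roots := hl a List.mem_cons_self
      obtain ⟨u', hu', hl1, hl2⟩ := ih (fun α hα => hl α (List.mem_cons_of_mem a hα))
      have hane : a ≠ 0 := R.root_ne_zero ha
      refine ⟨u' ∘ sRefl a, weyl_comp hu' (R.sRefl_mem_weyl ha), fun x => ?_, fun x => ?_⟩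
      · show u' (sRefl a (sRefl a ((t.map sRefl).foldr (· ∘ ·) id x))) = x
        rw [sRefl_sRefl hane]; exact hl1 _
      · show sRefl a ((t.map sRefl).foldr (· ∘ ·) id (u' (sRefl a x))) = x
        rw [hl2, sRefl_sRefl hane]

lemma wordProd_nil : R.wordProd [] = id := rfl

lemma wordProd_cons (i : Fin R.n) (t : List (Fin R.n)) :
    R.wordProd (i :: t) = sRefl (R.simple i) ∘ R.wordProd t := rfl

lemma wordProd_append (l l' : List (Fin R.n)) :
    R.wordProd (l ++ l') = R.wordProd l ∘ R.wordProd l' := by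
  show R.wordProd (l ++ l') = _
  rw [wordProd, wordProd, wordProd, List.map_append, List.foldr_append,
    foldr_comp_init (l.map _) ((l'.map _).foldr (· ∘ ·) id)]

lemma wordProd_mem_weyl (l : List (Fin R.n)) : R.wordProd l ∈ R.weyl := by
  refine ⟨l.map R.simple, fun α hα => ?_, ?_⟩
  · obtain ⟨i, _, rfl⟩ := List.mem_map.1 hα
    exact R.simple_root i
  · rw [List.map_map]; rfl

lemma wordProd_isOrtho (l : List (Fin R.n)) : R.IsOrtho (R.wordProd l) :=
  weyl_isOrtho (R.wordProd_mem_weyl l)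

lemma wordProd_reverse (l : List (Fin R.n)) (x : V) :
    R.wordProd l.reverse (R.wordProd l x) = x := by
  induction l generalizing x with
  | nil => rfl
  | cons a t ih =>
      rw [wordProd_cons, List.reverse_cons, wordProd_append]
      show R.wordProd t.reverse (sRefl (R.simple a) (sRefl (R.simple a) (R.wordProd t x))) = x
      rw [sRefl_sRefl (R.simple_ne_zero a), ih]

end RootSystemData

end RSAux

section CoeffAux

lemma inner_self_pos' {α : V} (h : α ≠ 0) : (0:ℝ) < ⟪α, α⟫ :=
  lt_of_le_of_ne real_inner_self_nonneg (Ne.symm (inner_self_ne_zero.2 h))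

/-- The basis of simple roots. -/
noncomputable def rsBasis (R : RootSystemData V) : Module.Basis (Fin R.n) ℝ V :=
  Module.Basis.mk R.simple_li R.simple_span.ge

lemma rsBasis_apply (R : RootSystemData V) (i : Fin R.n) : rsBasis R i = R.simple i :=
  Module.Basis.mk_apply _ _ i

/-- Coefficient of a vector in the simple-root basis. -/
noncomputable def cf (R : RootSystemData V) (β : V) (i : Fin R.n) : ℝ :=
  (rsBasis R).repr β i

variable (R : RootSystemData V)

lemma sum_cf (β : V) : ∑ i, cf R β i • R.simple i = β := by
  have := (rsBasis R).sum_repr β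
  simpa [cf, rsBasis_apply] using this

lemma cf_add (β γ : V) (i : Fin R.n) : cf R (β + γ) i = cf R β i + cf R γ i := by
  simp [cf]

lemma cf_smul (c : ℝ) (β : V) (i : Fin R.n) : cf R (c • β) i = c * cf R β i := by
  simp [cf]

lemma cf_sub (β γ : V) (i : Fin R.n) : cf R (β - γ) i = cf R β i - cf R γ i := by
  simp [cf]

lemma cf_neg (β : V) (i : Fin R.n) : cf R (-β) i = - cf R β i := by
  simp [cf]

lemma cf_simple (j i : Fin R.n) : cf R (R.simple j) i = if j = i then 1 else 0 := by
  rw [cf, ← rsBasis_apply, Module.Basis.repr_self_apply]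

lemma cf_eq_zero_all {β : V} (h : ∀ i, cf R β i = 0) : β = 0 := by
  have := sum_cf R β
  rw [← this]
  simp [h]

lemma cf_sum_smul (c : Fin R.n → ℝ) (f : Fin R.n → V) (j : Fin R.n) :
    cf R (∑ i, c i • f i) j = ∑ i, c i * cf R (f i) j := by
  unfold cf
  rw [map_sum]
  rw [Finsupp.finset_sum_apply]
  congr 1
  ext i
  simp

lemma pos_cf_nat {β : V} (hβ : β ∈ R.pos) : ∀ i, ∃ m : ℕ, cf R β i = m := by
  intro j
  obtain ⟨c, hc⟩ := R.pos_combo β hβ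
  refine ⟨c j, ?_⟩
  conv_lhs => rw [hc]
  rw [cf_sum_smul]
  rw [Finset.sum_eq_single j]
  · simp [cf_simple]
  · intro i _ hij
    simp [cf_simple, hij]
  · simp

lemma pos_cf_nonneg {β : V} (hβ : β ∈ R.pos) (i : Fin R.n) : 0 ≤ cf R β i := by
  obtain ⟨m, hm⟩ := pos_cf_nat R hβ i
  rw [hm]; positivity

lemma pos_not_neg {β : V} (hβ : β ∈ R.pos) : -β ∉ R.pos := by
  intro hβ'
  have hz : β = 0 := by
    apply cf_eq_zero_all R
    intro i
    have h1 := pos_cf_nonneg R hβ i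
    have h2 := pos_cf_nonneg R hβ' i
    rw [cf_neg] at h2
    linarith
  exact R.roots_nonzero (hz ▸ R.pos_subset hβ)

lemma root_sign {γ : V} (hγ : γ ∈ R.roots) : γ ∈ R.pos ∨ -γ ∈ R.pos := by
  have := R.pos_union ▸ hγ
  rcases this with h | h
  · exact Or.inl h
  · exact Or.inr (Set.mem_neg.1 h)

lemma nonneg_root_pos {γ : V} (hγ : γ ∈ R.roots) (h : ∀ i, 0 ≤ cf R γ i) : γ ∈ R.pos := by
  rcases root_sign R hγ with hp | hp
  · exact hp
  · exfalso
    have hz : γ = 0 := by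
      apply cf_eq_zero_all R
      intro i
      have h2 := pos_cf_nonneg R hp i
      rw [cf_neg] at h2
      linarith [h i]
    exact R.roots_nonzero (hz ▸ hγ)

lemma inner_eq_coroot (x α : V) (hα : α ≠ 0) :
    ⟪x, α⟫ = ⟪α, α⟫ / 2 * ⟪x, coroot α⟫ := by
  rw [inner_coroot_eq α x]
  have h : ⟪α, α⟫ ≠ (0:ℝ) := inner_self_ne_zero.2 hα
  field_simp

lemma dominant_inner_nonneg {x β : V} (hx : R.IsDominant x) (hβ : β ∈ R.pos) :
    0 ≤ ⟪x, β⟫ := by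
  rw [← sum_cf R β, inner_sum]
  apply Finset.sum_nonneg
  intro i _
  rw [real_inner_smul_right, inner_eq_coroot x _ (R.simple_ne_zero i)]
  have h1 := pos_cf_nonneg R hβ i
  have h2 := hx i
  have h3 := inner_self_pos' (R.simple_ne_zero i)
  exact mul_nonneg h1 (mul_nonneg (by positivity) h2)

lemma dominant_inner_coroot_nonneg {x β : V} (hx : R.IsDominant x) (hβ : β ∈ R.pos) :
    0 ≤ ⟪x, coroot β⟫ := by
  rw [inner_coroot_eq]
  have h3 := inner_self_pos' (R.root_ne_zero (R.pos_subset hβ))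
  have := dominant_inner_nonneg R hx hβ
  exact mul_nonneg (by positivity) this

lemma dominant_orth_support {x β : V} (hx : R.IsDominant x) (hβ : β ∈ R.pos)
    (h0 : ⟪x, coroot β⟫ = 0) : ∀ i, cf R β i ≠ 0 → ⟪x, coroot (R.simple i)⟫ = 0 := by
  have hβ0 : β ≠ 0 := R.root_ne_zero (R.pos_subset hβ)
  have hs := inner_self_pos' hβ0
  have hxβ : ⟪x, β⟫ = 0 := by
    rw [inner_eq_coroot x β hβ0, h0, mul_zero]
  have hsum : ∑ i, cf R β i * ⟪x, R.simple i⟫ = 0 := by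
    rw [← hxβ]
    conv_rhs => rw [← sum_cf R β]
    rw [inner_sum]
    congr 1; ext i; rw [real_inner_smul_right]
  intro i hi
  have hterm : ∀ j ∈ Finset.univ, (0:ℝ) ≤ cf R β j * ⟪x, R.simple j⟫ := by
    intro j _
    have h1 := pos_cf_nonneg R hβ j
    have h2 := hx j
    rw [inner_eq_coroot x _ (R.simple_ne_zero j)]
    have h3 := inner_self_pos' (R.simple_ne_zero j)
    exact mul_nonneg h1 (mul_nonneg (by positivity) h2)
  have := (Finset.sum_eq_zero_iff_of_nonneg hterm).1 hsum i (Finset.mem_univ i)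
  have hix : ⟪x, R.simple i⟫ = 0 := by
    rcases mul_eq_zero.1 this with h | h
    · exact absurd h hi
    · exact h
  rw [inner_coroot_eq, hix, mul_zero]

lemma sRefl_simple_pos {β : V} (hβ : β ∈ R.pos) (i : Fin R.n) (hne : β ≠ R.simple i) :
    sRefl (R.simple i) β ∈ R.pos := by
  have hδr : sRefl (R.simple i) β ∈ R.roots :=
    R.refl_mem _ (R.simple_root i) _ (R.pos_subset hβ)
  set δ := sRefl (R.simple i) β with hδ
  have hcf : ∀ j, j ≠ i → cf R δ j = cf R β j := by
    intro j hj
    rw [hδ, sRefl, cf_sub, cf_smul, cf_simple]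
    simp [Ne.symm hj]
  rcases root_sign R hδr with h | h
  · exact h
  · exfalso
    have hzero : ∀ j, j ≠ i → cf R β j = 0 := by
      intro j hj
      have h1 := pos_cf_nonneg R hβ j
      have h2 := pos_cf_nonneg R h j
      rw [cf_neg, hcf j hj] at h2
      linarith
    have hβeq : β = cf R β i • R.simple i := by
      conv_lhs => rw [← sum_cf R β]
      rw [Finset.sum_eq_single i]
      · intro b _ hb; rw [hzero b hb, zero_smul]
      · intro hb; exact absurd (Finset.mem_univ i) hb
    have hroot : cf R β i • R.simple i ∈ R.roots := hβeq ▸ R.pos_subset hβ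
    rcases R.reduced _ (R.simple_root i) _ hroot with h1 | h1
    · exact hne (hβeq.trans h1)
    · refine pos_not_neg R hβ ?_
      have hmb : -β = R.simple i := by rw [hβeq, h1, neg_neg]
      rw [hmb]; exact R.simple_mem i

lemma exists_pos_inner {β : V} (hβ : β ∈ R.pos) :
    ∃ i, 0 < cf R β i ∧ 0 < ⟪β, coroot (R.simple i)⟫ := by
  have hβ0 : β ≠ 0 := R.root_ne_zero (R.pos_subset hβ)
  have hpos : (0:ℝ) < ⟪β, β⟫ := inner_self_pos' hβ0
  have hsum : ⟪β, (∑ i, cf R β i • R.simple i : V)⟫ = ⟪β, β⟫ :=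
    congrArg (fun y => ⟪β, y⟫) (sum_cf R β)
  rw [inner_sum] at hsum
  simp only [real_inner_smul_right] at hsum
  by_contra hcon
  push_neg at hcon
  have hle : ∀ i ∈ Finset.univ, cf R β i * ⟪β, R.simple i⟫ ≤ 0 := by
    intro i _
    have h1 := pos_cf_nonneg R hβ i
    rcases eq_or_lt_of_le h1 with h1' | h1'
    · rw [← h1', zero_mul]
    · have h2 := hcon i h1'
      rw [inner_eq_coroot β _ (R.simple_ne_zero i)]
      have h3 := inner_self_pos' (R.simple_ne_zero i)
      have : ⟪R.simple i, R.simple i⟫ / 2 * ⟪β, coroot (R.simple i)⟫ ≤ 0 := by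
        apply mul_nonpos_of_nonneg_of_nonpos (by positivity) h2
      exact mul_nonpos_of_nonneg_of_nonpos (le_of_lt h1') this
  have : ⟪β, β⟫ ≤ 0 := hsum ▸ Finset.sum_nonpos hle
  linarith

lemma pos_inner_coroot_int {α β : V} (hα : α ∈ R.roots) (hβ : β ∈ R.roots) :
    ∃ m : ℤ, ⟪β, coroot α⟫ = m := R.crystallographic α hα β hβ

lemma conj_simple_bound : ∀ N : ℕ, ∀ β ∈ R.pos, (∑ i, cf R β i) ≤ (N:ℝ) →
    ∃ (l : List (Fin R.n)) (j : Fin R.n), R.wordProd l (R.simple j) = β ∧ 1 ≤ cf R β j := by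
  intro N
  induction N with
  | zero =>
      intro β hβ hle
      exfalso
      have h0 : ∀ i ∈ Finset.univ, cf R β i = 0 := by
        intro i _
        have h1 := pos_cf_nonneg R hβ i
        have h2 : ∑ j, cf R β j ≤ 0 := by exact_mod_cast hle
        have h3 : cf R β i ≤ ∑ j, cf R β j :=
          Finset.single_le_sum (fun j _ => pos_cf_nonneg R hβ j) (Finset.mem_univ i)
        linarith
      have : β = 0 := cf_eq_zero_all R (fun i => h0 i (Finset.mem_univ i))
      exact R.roots_nonzero (this ▸ R.pos_subset hβ)
  | succ N ih =>
      intro β hβ hle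
      obtain ⟨i, hci, hii⟩ := exists_pos_inner R hβ
      by_cases heq : β = R.simple i
      · refine ⟨[], i, ?_, ?_⟩
        · rw [heq]; rfl
        · rw [heq, cf_simple]; simp
      · obtain ⟨m, hm⟩ := pos_inner_coroot_int R (R.simple_root i) (R.pos_subset hβ)
        have hm1 : 1 ≤ m := by
          have : (0:ℝ) < m := hm ▸ hii
          exact_mod_cast this
        have hm1' : (1:ℝ) ≤ m := by exact_mod_cast hm1
        set δ := sRefl (R.simple i) β with hδdef
        have hδ : δ ∈ R.pos := sRefl_simple_pos R hβ i heq
        have hδeq : δ = β - (m:ℝ) • R.simple i := by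
          rw [hδdef, sRefl, hm]
        have hcfδ : ∀ j, cf R δ j = cf R β j - (m:ℝ) * (if i = j then 1 else 0) := by
          intro j
          rw [hδeq, cf_sub, cf_smul, cf_simple]
        have hsumδ : ∑ j, cf R δ j ≤ (N:ℝ) := by
          have : ∑ j, cf R δ j = (∑ j, cf R β j) - (m:ℝ) := by
            simp only [hcfδ]
            rw [Finset.sum_sub_distrib, ← Finset.mul_sum]
            simp
          rw [this]
          push_cast at hle ⊢
          linarith
        obtain ⟨l, j, hlj, hcj⟩ := ih δ hδ hsumδ
        refine ⟨i :: l, j, ?_, ?_⟩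
        · rw [R.wordProd_cons]
          show sRefl (R.simple i) (R.wordProd l (R.simple j)) = β
          rw [hlj, hδdef, sRefl_sRefl (R.simple_ne_zero i)]
        · have := hcfδ j
          by_cases hij : i = j
          · subst hij
            have h1 := pos_cf_nonneg R hδ i
            have h2 : cf R δ i = cf R β i - (m:ℝ) := by simpa using hcfδ i
            linarith
          · simp only [if_neg hij, mul_zero, sub_zero] at this
            linarith [hcj, this]

lemma pos_conj_simple {β : V} (hβ : β ∈ R.pos) :
    ∃ (l : List (Fin R.n)) (j : Fin R.n), R.wordProd l (R.simple j) = β ∧ 1 ≤ cf R β j := by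
  refine conj_simple_bound R ⌈∑ i, cf R β i⌉₊ β hβ (Nat.le_ceil _)

lemma pos_key (k : V → ℕ) (hk : R.IsWInvariant k) {β : V} (hβ : β ∈ R.pos) :
    ∃ j, k β = k (R.simple j) ∧ ⟪β, β⟫ = ⟪R.simple j, R.simple j⟫ ∧ 1 ≤ cf R β j := by
  obtain ⟨l, j, hlj, hcj⟩ := pos_conj_simple R hβ
  have hw := R.wordProd_mem_weyl l
  have ho := R.wordProd_isOrtho l
  refine ⟨j, ?_, ?_, hcj⟩
  · rw [← hlj]; exact hk _ hw _ (R.simple_root j)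
  · rw [← hlj, ho.2.2.1]

lemma k_neg (k : V → ℕ) (hk : R.IsWInvariant k) {γ : V} (hγ : γ ∈ R.roots) :
    k (-γ) = k γ := by
  have := hk _ (R.sRefl_mem_weyl hγ) _ hγ
  rwa [sRefl_self (R.root_ne_zero hγ)] at this

lemma k_weyl (k : V → ℕ) (hk : R.IsWInvariant k) {w : V → V} (hw : w ∈ R.weyl)
    {γ : V} (hγ : γ ∈ R.roots) : k (w γ) = k γ := hk _ hw _ hγ

lemma rho_coroot_simple (k : V → ℕ) (fw : Fin R.n → V)
    (hfw : ∀ i j, ⟪fw i, coroot (R.simple j)⟫ = if i = j then (1:ℝ) else 0) (i : Fin R.n) :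
    ⟪∑ j, (k (R.simple j) : ℝ) • fw j, coroot (R.simple i)⟫ = (k (R.simple i) : ℝ) := by
  rw [sum_inner, Finset.sum_eq_single i]
  · rw [real_inner_smul_left, hfw i i, if_pos rfl, mul_one]
  · intro b _ hb; rw [real_inner_smul_left, hfw b i, if_neg hb, mul_zero]
  · intro h; exact absurd (Finset.mem_univ i) h

lemma rho_ge (k : V → ℕ) (hk : R.IsWInvariant k) (fw : Fin R.n → V)
    (hfw : ∀ i j, ⟪fw i, coroot (R.simple j)⟫ = if i = j then (1:ℝ) else 0)
    {β : V} (hβ : β ∈ R.pos) :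
    (k β : ℝ) ≤ ⟪∑ j, (k (R.simple j) : ℝ) • fw j, coroot β⟫ := by
  set ρ := ∑ j, (k (R.simple j) : ℝ) • fw j with hρ
  have hβ0 : β ≠ 0 := R.root_ne_zero (R.pos_subset hβ)
  have hs : (0:ℝ) < ⟪β, β⟫ := inner_self_pos' hβ0
  have hexp : ⟪ρ, coroot β⟫
      = ∑ i, cf R β i * (⟪R.simple i, R.simple i⟫ / ⟪β, β⟫) * (k (R.simple i) : ℝ) := by
    rw [inner_coroot_eq β ρ]
    have h1 : ⟪ρ, β⟫ = ∑ i, cf R β i * ⟪ρ, R.simple i⟫ := by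
      have h2 := congrArg (fun y => ⟪ρ, y⟫) (sum_cf R β)
      beta_reduce at h2
      rw [inner_sum] at h2
      simp only [real_inner_smul_right] at h2
      exact h2.symm
    rw [h1, Finset.mul_sum]
    apply Finset.sum_congr rfl
    intro i _
    rw [inner_eq_coroot ρ _ (R.simple_ne_zero i), rho_coroot_simple R k fw hfw i]
    field_simp
  obtain ⟨j, hkj, hsj, hcj⟩ := pos_key R k hk hβ
  rw [hexp]
  have hterm : ∀ i ∈ Finset.univ,
      (0:ℝ) ≤ cf R β i * (⟪R.simple i, R.simple i⟫ / ⟪β, β⟫) * (k (R.simple i) : ℝ) := by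
    intro i _
    have h1 := pos_cf_nonneg R hβ i
    have h3 := inner_self_pos' (R.simple_ne_zero i)
    positivity
  have hj : (k β : ℝ) ≤ cf R β j * (⟪R.simple j, R.simple j⟫ / ⟪β, β⟫) * (k (R.simple j) : ℝ) := by
    rw [← hsj, div_self (ne_of_gt hs), mul_one, ← hkj]
    have : (0:ℝ) ≤ (k β : ℝ) := by positivity
    nlinarith
  exact le_trans hj (Finset.single_le_sum hterm (Finset.mem_univ j))

lemma simple_int_mem_weightLattice {x : V}
    (h : ∀ i, ∃ m : ℤ, ⟪x, coroot (R.simple i)⟫ = m) : x ∈ R.weightLattice := by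
  have key : ∀ (l : List (Fin R.n)) (j : Fin R.n),
      ∃ m : ℤ, ⟪x, coroot (R.wordProd l (R.simple j))⟫ = m := by
    intro l
    induction l with
    | nil => intro j; exact h j
    | cons i t ih =>
        intro j
        obtain ⟨m1, hm1⟩ := ih j
        obtain ⟨m2, hm2⟩ := h i
        set δ := R.wordProd t (R.simple j) with hδ
        have hδr : δ ∈ R.roots := (R.wordProd_isOrtho t).2.2.2 _ (R.simple_root j)
        obtain ⟨m3, hm3⟩ := R.crystallographic δ hδr (R.simple i) (R.simple_root i)
        have hco : R.wordProd (i :: t) (R.simple j) = sRefl (R.simple i) δ := rfl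
        refine ⟨m1 - m2 * m3, ?_⟩
        rw [hco, ← (R.isOrtho_sRefl (R.simple_root i)).map_coroot δ, ← sRefl_symm,
          sRefl, inner_sub_left, real_inner_smul_left, hm1, hm2, hm3]
        push_cast
        ring
  intro γ hγ
  rcases root_sign R hγ with hp | hp
  · obtain ⟨l, j, hlj, _⟩ := pos_conj_simple R hp
    rw [← hlj]; exact key l j
  · obtain ⟨l, j, hlj, _⟩ := pos_conj_simple R hp
    obtain ⟨m, hm⟩ := key l j
    rw [hlj] at hm
    refine ⟨-m, ?_⟩
    rw [coroot_neg, inner_neg_right] at hm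
    push_cast
    linarith

lemma weyl_mem_weightLattice {w : V → V} {x : V} (hw : w ∈ R.weyl)
    (hx : x ∈ R.weightLattice) : w x ∈ R.weightLattice := by
  intro γ hγ
  obtain ⟨w', hw', hl, hr⟩ := R.weyl_inv hw
  have ho := R.weyl_isOrtho hw
  have ho' := R.weyl_isOrtho hw'
  have hδ : w' γ ∈ R.roots := ho'.2.2.2 γ hγ
  obtain ⟨m, hm⟩ := hx _ hδ
  refine ⟨m, ?_⟩
  conv_lhs => rw [← hr γ]
  rw [ho.inner_coroot x (w' γ)]
  exact hm

lemma sRefl_root_word {γ : V} (hγ : γ ∈ R.roots) : ∃ l, sRefl γ = R.wordProd l := by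
  have main : ∀ δ ∈ R.pos, ∃ l, sRefl δ = R.wordProd l := by
    intro δ hδ
    obtain ⟨l₀, j, hlj, _⟩ := pos_conj_simple R hδ
    refine ⟨l₀ ++ j :: l₀.reverse, ?_⟩
    funext x
    rw [R.wordProd_append]
    show sRefl δ x = R.wordProd l₀ (R.wordProd (j :: l₀.reverse) x)
    rw [R.wordProd_cons]
    show sRefl δ x = R.wordProd l₀ (sRefl (R.simple j) (R.wordProd l₀.reverse x))
    have ho := R.wordProd_isOrtho l₀
    rw [ho.sRefl_conj (R.simple j) (R.wordProd l₀.reverse x), hlj]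
    have h2 := R.wordProd_reverse l₀.reverse x
    rw [List.reverse_reverse] at h2
    rw [h2]
  rcases root_sign R hγ with hp | hp
  · exact main γ hp
  · obtain ⟨l, hl⟩ := main (-γ) hp
    exact ⟨l, by rw [← sRefl_neg_root γ, hl]⟩

lemma weyl_word {w : V → V} (hw : w ∈ R.weyl) : ∃ l, w = R.wordProd l := by
  obtain ⟨l, hl, rfl⟩ := hw
  induction l with
  | nil => exact ⟨[], rfl⟩
  | cons a t ih =>
      have ha : a ∈ R.roots := hl a List.mem_cons_self
      obtain ⟨lt, hlt⟩ := ih (fun α hα => hl α (List.mem_cons_of_mem a hα))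
      obtain ⟨la, hla⟩ := sRefl_root_word R ha
      refine ⟨la ++ lt, ?_⟩
      show sRefl a ∘ (t.map sRefl).foldr (· ∘ ·) id = R.wordProd (la ++ lt)
      rw [R.wordProd_append, ← hla, ← hlt]

lemma coxLen_le {w : V → V} {l : List (Fin R.n)} (h : w = R.wordProd l) :
    R.coxLen w ≤ l.length := Nat.sInf_le ⟨l, rfl, h⟩

lemma coxLen_spec {w : V → V} (hw : w ∈ R.weyl) :
    ∃ l : List (Fin R.n), l.length = R.coxLen w ∧ w = R.wordProd l := by
  obtain ⟨l, hl⟩ := weyl_word R hw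
  have hne : {m : ℕ | ∃ l : List (Fin R.n), l.length = m ∧ w = R.wordProd l}.Nonempty :=
    ⟨l.length, l, rfl, hl⟩
  exact Nat.sInf_mem hne

lemma exchange : ∀ (l : List (Fin R.n)) (β : V), β ∈ R.pos → -(R.wordProd l β) ∈ R.pos →
    ∃ l' : List (Fin R.n), l'.length + 1 = l.length ∧
      R.wordProd l' = R.wordProd l ∘ sRefl β := by
  intro l
  induction l with
  | nil =>
      intro β hβ hneg
      exact absurd hneg (pos_not_neg R hβ)
  | cons i t ih =>
      intro β hβ hneg
      have hu : R.wordProd t β ∈ R.roots :=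
        (R.wordProd_isOrtho t).2.2.2 β (R.pos_subset hβ)
      have hcons : R.wordProd (i :: t) β = sRefl (R.simple i) (R.wordProd t β) := rfl
      rcases root_sign R hu with hp | hp
      · have hneg' : -(sRefl (R.simple i) (R.wordProd t β)) ∈ R.pos := by rwa [hcons] at hneg
        have heq : R.wordProd t β = R.simple i := by
          by_contra hne
          exact pos_not_neg R (sRefl_simple_pos R hp i hne) hneg'
        refine ⟨t, rfl, ?_⟩
        funext x
        show R.wordProd t x = sRefl (R.simple i) (R.wordProd t (sRefl β x))
        rw [(R.wordProd_isOrtho t).sRefl_conj β x, heq, sRefl_sRefl (R.simple_ne_zero i)]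
      · obtain ⟨t', hlen, ht'⟩ := ih β hβ hp
        refine ⟨i :: t', by simp only [List.length_cons]; omega, ?_⟩
        funext x
        show sRefl (R.simple i) (R.wordProd t' x) = sRefl (R.simple i) (R.wordProd t (sRefl β x))
        rw [congrFun ht' x]
        rfl

lemma min_inv_pos {v : V → V} (hv : v ∈ R.weyl) {x y : V}
    (hmin : ∀ w ∈ R.weyl, w x = y → R.coxLen v ≤ R.coxLen w) (hvx : v x = y)
    {β : V} (hβ : β ∈ R.pos) (horth : ⟪x, coroot β⟫ = 0) : v β ∈ R.pos := by
  have hvβ : v β ∈ R.roots := (R.weyl_isOrtho hv).2.2.2 β (R.pos_subset hβ)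
  rcases root_sign R hvβ with hp | hp
  · exact hp
  exfalso
  obtain ⟨l, hlen, hword⟩ := coxLen_spec R hv
  have hneg : -(R.wordProd l β) ∈ R.pos := by rw [← hword]; exact hp
  obtain ⟨l', hlen', hl'⟩ := exchange R l β hβ hneg
  have hmem : v ∘ sRefl β ∈ R.weyl :=
    R.weyl_comp hv (R.sRefl_mem_weyl (R.pos_subset hβ))
  have hfix : (v ∘ sRefl β) x = y := by
    show v (sRefl β x) = y
    rw [sRefl_fix horth, hvx]
  have h1 := hmin _ hmem hfix
  have h2 : R.coxLen (v ∘ sRefl β) ≤ l'.length := by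
    apply coxLen_le R
    rw [hl', ← hword]
  omega

lemma pos_preserving_id {w : V → V} (hw : w ∈ R.weyl)
    (hpos : ∀ β ∈ R.pos, w β ∈ R.pos) : w = id := by
  obtain ⟨l, hlen, hword⟩ := coxLen_spec R hw
  cases l with
  | nil => rw [hword]; rfl
  | cons i t =>
      exfalso
      obtain ⟨w', hw', hli, hri⟩ := R.weyl_inv hw
      have ho := R.weyl_isOrtho hw
      have ho' := R.weyl_isOrtho hw'
      set δ := w' (R.simple i) with hδdef
      have hδr : δ ∈ R.roots := ho'.2.2.2 _ (R.simple_root i)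
      have hwδ : w δ = R.simple i := hri _
      have hδpos : δ ∈ R.pos := by
        rcases root_sign R hδr with hp | hp
        · exact hp
        · exfalso
          have h1 : w (-δ) ∈ R.pos := hpos _ hp
          have h2 : w (-δ) = -(R.simple i) := by rw [ho.map_neg, hwδ]
          rw [h2] at h1
          exact pos_not_neg R (R.simple_mem i) h1
      have hu : R.wordProd t = sRefl (R.simple i) ∘ w := by
        funext x
        rw [hword]
        show R.wordProd t x = sRefl (R.simple i) (sRefl (R.simple i) (R.wordProd t x))
        rw [sRefl_sRefl (R.simple_ne_zero i)]
      have huδ : -(R.wordProd t δ) ∈ R.pos := by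
        rw [hu]
        show -(sRefl (R.simple i) (w δ)) ∈ R.pos
        rw [hwδ, sRefl_self (R.simple_ne_zero i), neg_neg]
        exact R.simple_mem i
      obtain ⟨t', hlen', ht'⟩ := exchange R t δ hδpos huδ
      have hwt' : w = R.wordProd t' := by
        funext x
        rw [congrFun ht' x]
        show w x = R.wordProd t (sRefl δ x)
        rw [hu]
        show w x = sRefl (R.simple i) (w (sRefl δ x))
        rw [ho.sRefl_conj δ x, hwδ, sRefl_sRefl (R.simple_ne_zero i)]
      have hle := coxLen_le R hwt'
      have : (i :: t).length = R.coxLen w := hlen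
      simp only [List.length_cons] at this
      omega

lemma simple_pos_preserving {w : V → V} (hw : w ∈ R.weyl)
    (h : ∀ i, w (R.simple i) ∈ R.pos) : ∀ β ∈ R.pos, w β ∈ R.pos := by
  intro β hβ
  have ho := R.weyl_isOrtho hw
  have hwβr : w β ∈ R.roots := ho.2.2.2 β (R.pos_subset hβ)
  apply nonneg_root_pos R hwβr
  intro j
  have hrepr : w β = ∑ i, cf R β i • w (R.simple i) := by
    conv_lhs => rw [← sum_cf R β]
    rw [ho.map_sum]
    apply Finset.sum_congr rfl
    intro i _
    rw [ho.2.1]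
  rw [hrepr, cf_sum_smul]
  apply Finset.sum_nonneg
  intro i _
  exact mul_nonneg (pos_cf_nonneg R hβ i) (pos_cf_nonneg R (h i) j)

/-- The inversion set of `w`. -/
def invSet (R : RootSystemData V) (w : V → V) : Set V := {β | β ∈ R.pos ∧ -(w β) ∈ R.pos}

lemma invSet_finite (w : V → V) : (invSet R w).Finite :=
  R.roots_finite.subset (fun β hβ => R.pos_subset hβ.1)

lemma invSet_comp (w : V → V) (ho : R.IsOrtho w) (i : Fin R.n)
    (hi : -(w (R.simple i)) ∈ R.pos) :
    invSet R (w ∘ sRefl (R.simple i)) = sRefl (R.simple i) '' (invSet R w \ {R.simple i}) := by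
  ext β
  constructor
  · rintro ⟨hβ, hneg⟩
    have hβne : β ≠ R.simple i := by
      rintro rfl
      have h2 : (w ∘ sRefl (R.simple i)) (R.simple i) = -(w (R.simple i)) := by
        show w (sRefl (R.simple i) (R.simple i)) = -(w (R.simple i))
        rw [sRefl_self (R.simple_ne_zero i), ho.map_neg]
      rw [h2, neg_neg] at hneg
      exact pos_not_neg R hneg hi
    set γ := sRefl (R.simple i) β with hγdef
    have hγpos : γ ∈ R.pos := sRefl_simple_pos R hβ i hβne
    have hγne : γ ≠ R.simple i := by
      intro h
      have : β = -(R.simple i) := by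
        rw [← sRefl_sRefl (R.simple_ne_zero i) β, ← hγdef, h,
          sRefl_self (R.simple_ne_zero i)]
      rw [this] at hβ
      exact pos_not_neg R (R.simple_mem i) hβ
    refine ⟨γ, ⟨⟨hγpos, ?_⟩, hγne⟩, ?_⟩
    · exact hneg
    · rw [hγdef, sRefl_sRefl (R.simple_ne_zero i)]
  · rintro ⟨γ, ⟨⟨hγpos, hγneg⟩, hγne⟩, rfl⟩
    have hβpos : sRefl (R.simple i) γ ∈ R.pos := sRefl_simple_pos R hγpos i hγne
    refine ⟨hβpos, ?_⟩
    show -(w (sRefl (R.simple i) (sRefl (R.simple i) γ))) ∈ R.pos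
    rw [sRefl_sRefl (R.simple_ne_zero i)]
    exact hγneg

lemma dominant_unique_aux : ∀ N : ℕ, ∀ w ∈ R.weyl, (invSet R w).ncard ≤ N →
    ∀ x : V, R.IsDominant x → R.IsDominant (w x) → w x = x := by
  intro N
  induction N with
  | zero =>
      intro w hw hcard x hx hwx
      have hall : ∀ i, w (R.simple i) ∈ R.pos := by
        intro i
        have hr : w (R.simple i) ∈ R.roots := (R.weyl_isOrtho hw).2.2.2 _ (R.simple_root i)
        rcases root_sign R hr with hp | hp
        · exact hp
        · exfalso
          have hmem : R.simple i ∈ invSet R w := ⟨R.simple_mem i, hp⟩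
          have := (Set.ncard_pos (invSet_finite R w)).2 ⟨_, hmem⟩
          omega
      rw [pos_preserving_id R hw (simple_pos_preserving R hw hall)]
      rfl
  | succ N ih =>
      intro w hw hcard x hx hwx
      by_cases hall : ∀ i, w (R.simple i) ∈ R.pos
      · rw [pos_preserving_id R hw (simple_pos_preserving R hw hall)]
        rfl
      · push_neg at hall
        obtain ⟨i, hi⟩ := hall
        have ho := R.weyl_isOrtho hw
        have hr : w (R.simple i) ∈ R.roots := ho.2.2.2 _ (R.simple_root i)
        have hwi : -(w (R.simple i)) ∈ R.pos := by
          rcases root_sign R hr with hp | hp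
          · exact absurd hp hi
          · exact hp
        have h1 : 0 ≤ ⟪x, coroot (R.simple i)⟫ := hx i
        have h2 : 0 ≤ ⟪w x, coroot (-(w (R.simple i)))⟫ :=
          dominant_inner_coroot_nonneg R hwx hwi
        rw [coroot_neg, inner_neg_right, ho.inner_coroot x (R.simple i)] at h2
        have h0 : ⟪x, coroot (R.simple i)⟫ = 0 := le_antisymm (by linarith) h1
        have hfix : sRefl (R.simple i) x = x := sRefl_fix h0
        have hmem : R.simple i ∈ invSet R w := ⟨R.simple_mem i, hwi⟩
        have hcard' : (invSet R (w ∘ sRefl (R.simple i))).ncard ≤ N := by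
          rw [invSet_comp R w ho i hwi]
          rw [Set.ncard_image_of_injective _
            (Function.LeftInverse.injective (g := sRefl (R.simple i))
              (fun z => sRefl_sRefl (R.simple_ne_zero i) z))]
          rw [Set.ncard_diff_singleton_of_mem hmem]
          have hpos := (Set.ncard_pos (invSet_finite R w)).2 ⟨_, hmem⟩
          omega
        have hw' : w ∘ sRefl (R.simple i) ∈ R.weyl :=
          R.weyl_comp hw (R.sRefl_mem_weyl (R.simple_root i))
        have hwx' : (w ∘ sRefl (R.simple i)) x = w x := by
          show w (sRefl (R.simple i) x) = w x
          rw [hfix]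
        have := ih _ hw' hcard' x hx (by rwa [hwx'])
        rw [← hwx', this]

lemma dominant_unique {w : V → V} (hw : w ∈ R.weyl) {x : V} (hx : R.IsDominant x)
    (hwx : R.IsDominant (w x)) : w x = x :=
  dominant_unique_aux R _ w hw le_rfl x hx hwx

end CoeffAux

/-- The sinks of truncated interval-firing are exactly the `η_𝐤(λ)` for `λ ∈ P`. -/
theorem statement6 (R : RootSystemData V)
    (fw : Fin R.n → V)
    (hfw : ∀ i j, ⟪fw i, coroot (R.simple j)⟫ = if i = j then (1 : ℝ) else 0)
    (dm : V → V)
    (hdm : ∀ lam ∈ R.weightLattice, dm lam ∈ R.orbit lam ∧ R.IsDominant (dm lam))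
    (wl : V → V → V)
    (hwl : ∀ lam ∈ R.weightLattice, wl lam ∈ R.weyl ∧ wl lam (dm lam) = lam ∧
      ∀ w ∈ R.weyl, w (dm lam) = lam → R.coxLen (wl lam) ≤ R.coxLen w)
    (k : V → ℕ) (hk : R.IsWInvariant k) (mu : V) (hmu : mu ∈ R.weightLattice) :
    (¬ ∃ ν, R.trFire k mu ν) ↔
      ∃ lam ∈ R.weightLattice, mu = etaMap R fw wl k lam := by
  classical
  set ρ : V := ∑ i, (k (R.simple i) : ℝ) • fw i with hρdef
  have hρP : ρ ∈ R.weightLattice := by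
    apply simple_int_mem_weightLattice R
    intro i
    refine ⟨(k (R.simple i) : ℤ), ?_⟩
    rw [hρdef, rho_coroot_simple R k fw hfw i]
    push_cast
    ring
  have sink_iff : (¬ ∃ ν, R.trFire k mu ν) ↔ ∀ α ∈ R.pos,
      (k α : ℝ) ≤ ⟪mu, coroot α⟫ ∨ ⟪mu, coroot α⟫ + 1 ≤ -(k α : ℝ) := by
    constructor
    · intro h α hα
      by_contra hcon
      push_neg at hcon
      obtain ⟨h1, h2⟩ := hcon
      apply h
      obtain ⟨m, hm⟩ := hmu α (R.pos_subset hα)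
      rw [hm] at h1 h2
      have hi1 : m < (k α : ℤ) := by exact_mod_cast h1
      have hi2 : -(k α : ℤ) < m + 1 := by exact_mod_cast h2
      refine ⟨mu + α, hmu, α, hα, rfl, ?_, ?_⟩
      · rw [hm]
        have : -(k α : ℤ) + 1 ≤ m + 1 := by omega
        exact_mod_cast this
      · rw [hm]
        have : m + 1 ≤ (k α : ℤ) := by omega
        exact_mod_cast this
    · rintro hS ⟨ν, _, α, hα, _, hl, hr⟩
      rcases hS α hα with h | h
      · linarith
      · linarith
  rw [sink_iff]
  constructor
  · -- sink → exists lam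
    intro hS
    obtain ⟨hdm1, hdm2⟩ := hdm mu hmu
    obtain ⟨hσ_mem, hσ_eq, hσ_min⟩ := hwl mu hmu
    set σ := wl mu with hσdef
    set ν := dm mu with hνdef
    obtain ⟨σ', hσ'mem, hσ'l, hσ'r⟩ := R.weyl_inv hσ_mem
    have hoσ := R.weyl_isOrtho hσ_mem
    have hoσ' := R.weyl_isOrtho hσ'mem
    obtain ⟨wν, hwνmem, hwνeq⟩ := hdm1
    have hνP : ν ∈ R.weightLattice := by
      rw [hwνeq]; exact weyl_mem_weightLattice R hwνmem hmu
    have hpair : ∀ i, ⟪mu, coroot (σ (R.simple i))⟫ = ⟪ν, coroot (R.simple i)⟫ := by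
      intro i
      rw [← hσ_eq, hoσ.inner_coroot]
    have hknn : ∀ γ : V, (0:ℝ) ≤ (k γ : ℝ) := fun γ => by positivity
    have hstep1 : ∀ i, (k (R.simple i) : ℝ) ≤ ⟪ν, coroot (R.simple i)⟫ := by
      intro i
      have hri : σ (R.simple i) ∈ R.roots := hoσ.2.2.2 _ (R.simple_root i)
      rcases root_sign R hri with hp | hp
      · have hkk : k (σ (R.simple i)) = k (R.simple i) :=
          k_weyl R k hk hσ_mem (R.simple_root i)
        rcases hS _ hp with h | h
        · rw [hpair i, hkk] at h
          exact h
        · exfalso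
          rw [hpair i] at h
          have := hdm2 i
          have := hknn (σ (R.simple i))
          linarith
      · have hkk : k (-(σ (R.simple i))) = k (R.simple i) := by
          rw [k_neg R k hk hri, k_weyl R k hk hσ_mem (R.simple_root i)]
        have hpair2 : ⟪mu, coroot (-(σ (R.simple i)))⟫ = -⟪ν, coroot (R.simple i)⟫ := by
          rw [coroot_neg, inner_neg_right, hpair i]
        rcases hS _ hp with h | h
        · rw [hpair2, hkk] at h
          have := hdm2 i
          have := hknn (R.simple i)
          linarith
        · rw [hpair2, hkk] at h
          linarith
    have hxdom : R.IsDominant (ν - ρ) := by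
      intro i
      rw [inner_sub_left, hρdef, rho_coroot_simple R k fw hfw i]
      have := hstep1 i
      linarith
    set x := ν - ρ with hxdef
    have hxP : x ∈ R.weightLattice := by
      intro γ hγ
      obtain ⟨m1, hm1⟩ := hνP γ hγ
      obtain ⟨m2, hm2⟩ := hρP γ hγ
      refine ⟨m1 - m2, ?_⟩
      rw [hxdef, inner_sub_left, hm1, hm2]
      push_cast
      ring
    set lam := σ x with hlam
    have hlamP : lam ∈ R.weightLattice := weyl_mem_weightLattice R hσ_mem hxP
    refine ⟨lam, hlamP, ?_⟩
    obtain ⟨hdml1, hdml2⟩ := hdm lam hlamP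
    obtain ⟨w'', hw''mem, hw''eq⟩ := hdml1
    have hcomp : dm lam = (w'' ∘ σ) x := by rw [hw''eq, hlam]; rfl
    have hdmx : dm lam = x := by
      rw [hcomp]
      exact dominant_unique R (R.weyl_comp hw''mem hσ_mem) hxdom
        (by rw [← hcomp]; exact hdml2)
    obtain ⟨hv_mem, hv_eq, hv_min⟩ := hwl lam hlamP
    set v := wl lam with hvdef
    rw [hdmx] at hv_eq hv_min
    have hσpos_orth : ∀ β ∈ R.pos, ⟪ν, coroot β⟫ = 0 → σ β ∈ R.pos := by
      intro β hβ h0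
      exact min_inv_pos R hσ_mem hσ_min hσ_eq hβ h0
    have claim1 : ∀ i, ⟪x, coroot (R.simple i)⟫ = 0 → σ (R.simple i) ∈ R.pos := by
      intro i h0
      have hν_i : ⟪ν, coroot (R.simple i)⟫ = (k (R.simple i) : ℝ) := by
        have h1 : ⟪x, coroot (R.simple i)⟫
            = ⟪ν, coroot (R.simple i)⟫ - (k (R.simple i) : ℝ) := by
          rw [hxdef, inner_sub_left, hρdef, rho_coroot_simple R k fw hfw i]
        rw [h1] at h0
        linarith
      have hri : σ (R.simple i) ∈ R.roots := hoσ.2.2.2 _ (R.simple_root i)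
      rcases root_sign R hri with hp | hp
      · exact hp
      · exfalso
        have hkk : k (-(σ (R.simple i))) = k (R.simple i) := by
          rw [k_neg R k hk hri, k_weyl R k hk hσ_mem (R.simple_root i)]
        have hpair2 : ⟪mu, coroot (-(σ (R.simple i)))⟫ = -(k (R.simple i) : ℝ) := by
          rw [coroot_neg, inner_neg_right, hpair i, hν_i]
        rcases hS _ hp with h | h
        · rw [hpair2, hkk] at h
          have hk0 : (k (R.simple i) : ℝ) = 0 := by
            have := hknn (R.simple i)
            linarith
          have hσpos : σ (R.simple i) ∈ R.pos :=
            hσpos_orth _ (R.simple_mem i) (by rw [hν_i, hk0])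
          exact pos_not_neg R hσpos hp
        · rw [hpair2, hkk] at h
          linarith
    have claim2 : ∀ β ∈ R.pos, ⟪x, coroot β⟫ = 0 → σ β ∈ R.pos := by
      intro β hβ h0
      have hsupp := dominant_orth_support R hxdom hβ h0
      have hσβr : σ β ∈ R.roots := hoσ.2.2.2 β (R.pos_subset hβ)
      apply nonneg_root_pos R hσβr
      intro j
      have hrepr : σ β = ∑ i, cf R β i • σ (R.simple i) := by
        conv_lhs => rw [← sum_cf R β]
        rw [hoσ.map_sum]
        apply Finset.sum_congr rfl
        intro i _
        rw [hoσ.2.1]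
      rw [hrepr, cf_sum_smul]
      apply Finset.sum_nonneg
      intro i _
      by_cases hci : cf R β i = 0
      · rw [hci, zero_mul]
      · have hia := hsupp i hci
        have hi0 : ⟪x, coroot (R.simple i)⟫ = 0 := hia
        exact mul_nonneg (pos_cf_nonneg R hβ i) (pos_cf_nonneg R (claim1 i hi0) j)
    have hu_mem : σ' ∘ v ∈ R.weyl := R.weyl_comp hσ'mem hv_mem
    have hux : (σ' ∘ v) x = x := by
      show σ' (v x) = x
      rw [hv_eq, hlam, hσ'l]
    have hou := R.weyl_isOrtho hu_mem
    have husimple : ∀ i, (σ' ∘ v) (R.simple i) ∈ R.pos := by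
      intro i
      have hr : (σ' ∘ v) (R.simple i) ∈ R.roots := hou.2.2.2 _ (R.simple_root i)
      rcases root_sign R hr with hp | hp
      · exact hp
      · exfalso
        set γ := -((σ' ∘ v) (R.simple i)) with hγdef
        have e1 : ⟪x, coroot (R.simple i)⟫ = -⟪x, coroot γ⟫ := by
          have e2 : ⟪(σ' ∘ v) x, coroot ((σ' ∘ v) (R.simple i))⟫
              = ⟪x, coroot (R.simple i)⟫ := hou.inner_coroot x (R.simple i)
          rw [hux] at e2
          rw [← e2, hγdef, coroot_neg, inner_neg_right, neg_neg]
        have hz1 : ⟪x, coroot (R.simple i)⟫ = 0 := by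
          have a1 := hxdom i
          have a2 := dominant_inner_coroot_nonneg R hxdom hp
          linarith
        have hz2 : ⟪x, coroot γ⟫ = 0 := by rw [e1] at hz1; linarith
        have hσγ : σ γ ∈ R.pos := claim2 γ hp hz2
        have hvαi : v (R.simple i) = -(σ γ) := by
          have e3 : σ ((σ' ∘ v) (R.simple i)) = v (R.simple i) := by
            show σ (σ' (v (R.simple i))) = v (R.simple i)
            rw [hσ'r]
          have e4 : (σ' ∘ v) (R.simple i) = -γ := by rw [hγdef, neg_neg]
          rw [← e3, e4, hoσ.map_neg]
        have hvpos : v (R.simple i) ∈ R.pos :=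
          min_inv_pos R hv_mem hv_min hv_eq (R.simple_mem i) hz1
        rw [hvαi] at hvpos
        exact pos_not_neg R hσγ hvpos
    have hu_id : σ' ∘ v = id :=
      pos_preserving_id R hu_mem (simple_pos_preserving R hu_mem husimple)
    have hveqσ : ∀ z, v z = σ z := by
      intro z
      have e5 : σ ((σ' ∘ v) z) = σ (id z) := by rw [hu_id]
      have e6 : σ (σ' (v z)) = v z := hσ'r _
      rw [show σ ((σ' ∘ v) z) = σ (σ' (v z)) from rfl, e6] at e5
      exact e5
    show mu = etaMap R fw wl k lam
    have hfinal : etaMap R fw wl k lam = lam + v ρ := by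
      rw [etaMap, ← hρdef, hvdef]
    rw [hfinal, ← hσ_eq]
    have hνeq : ν = x + ρ := by rw [hxdef]; abel
    rw [hνeq, hoσ.1, hveqσ ρ, hlam]
  · -- exists lam → sink
    rintro ⟨lam, hlamP, heq⟩ α hα
    obtain ⟨hdm1, hdm2⟩ := hdm lam hlamP
    obtain ⟨hv_mem, hv_eq, hv_min⟩ := hwl lam hlamP
    set v := wl lam with hvdef
    set x := dm lam with hxdef
    obtain ⟨w'', hw''mem, hw''⟩ := hdm1
    have hxP : x ∈ R.weightLattice := by
      rw [hw'']; exact weyl_mem_weightLattice R hw''mem hlamP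
    have hov := R.weyl_isOrtho hv_mem
    obtain ⟨v', hv'mem, hv'l, hv'r⟩ := R.weyl_inv hv_mem
    have hov' := R.weyl_isOrtho hv'mem
    have hmueq : mu = v (x + ρ) := by
      rw [heq, etaMap, ← hρdef, hov.1, hv_eq]
    set β := v' α with hβdef
    have hβroot : β ∈ R.roots := hov'.2.2.2 α (R.pos_subset hα)
    have hvβ : v β = α := hv'r α
    have hkα : ⟪mu, coroot α⟫ = ⟪x + ρ, coroot β⟫ := by
      rw [hmueq, ← hvβ, hov.inner_coroot (x + ρ) β]
    rcases root_sign R hβroot with hp | hp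
    · left
      have h1 : 0 ≤ ⟪x, coroot β⟫ := dominant_inner_coroot_nonneg R hdm2 hp
      have h2 : (k β : ℝ) ≤ ⟪ρ, coroot β⟫ := by
        rw [hρdef]; exact rho_ge R k hk fw hfw hp
      have hkk : k α = k β := by
        rw [← hvβ]; exact k_weyl R k hk hv_mem hβroot
      rw [hkα, inner_add_left, hkk]
      linarith
    · right
      have hβ₀root : -β ∈ R.roots := R.pos_subset hp
      have h2 : (k (-β) : ℝ) ≤ ⟪ρ, coroot (-β)⟫ := by
        rw [hρdef]; exact rho_ge R k hk fw hfw hp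
      have h1 : 0 ≤ ⟪x, coroot (-β)⟫ := dominant_inner_coroot_nonneg R hdm2 hp
      have hstrict : ⟪x, coroot (-β)⟫ ≠ 0 := by
        intro h0
        have hvm := min_inv_pos R hv_mem hv_min hv_eq hp h0
        have : v (-β) = -α := by rw [hov.map_neg, hvβ]
        rw [this] at hvm
        exact pos_not_neg R hα hvm
      obtain ⟨m, hm⟩ := hxP (-β) hβ₀root
      have hm1 : (1:ℝ) ≤ ⟪x, coroot (-β)⟫ := by
        have hm0 : (0:ℝ) < m := by
          rw [hm] at h1 hstrict
          rcases lt_or_eq_of_le h1 with h | h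
          · exact h
          · exact absurd h.symm hstrict
        have : (1:ℤ) ≤ m := by exact_mod_cast hm0
        rw [hm]
        exact_mod_cast this
      have hkk : k α = k (-β) := by
        rw [← hvβ, k_weyl R k hk hv_mem hβroot, k_neg R k hk hβroot]
      have hval : ⟪mu, coroot α⟫ = -(⟪x, coroot (-β)⟫ + ⟪ρ, coroot (-β)⟫) := by
        rw [hkα, coroot_neg]
        simp only [inner_neg_right]
        rw [inner_add_left]
        ring
      rw [hval, hkk]
      linarith
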